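/- Let u be a C² solution of the wave equation u_{xx} − u_{yy} = 0 in the rectangle (0,l) × (0,T) with T > l, continuous together with u_x and u_y up to the boundary, with initial traces τ₁(x) = u_y(x,0) and τ₂(x) = u(x,0) entering as in the α → 2 limit. Then for all y with l ≤ y ≤ T: u(0,y) = ∫₀^l τ₁(t) dt + ∫₀^{y-l} u_x(l,s) ds − ∫₀^y u_x(0,s) ds + u(l, y-l), and u(l,y) = ∫₀^l τ₁(t) dt − ∫₀^{y-l} u_x(0,s) ds + ∫₀^y u_x(l,s) ds + u(0, y-l). -/

import Mathlib

open Set Filter Topology intervalIntegral MeasureTheory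
set_option maxHeartbeats 16000000

theorem wave_necessary_conditions_large_time (l T : ℝ) (hl : 0 < l) (hT : l < T)
    (u : ℝ → ℝ → ℝ) (τ₁ τ₂ : ℝ → ℝ)
    -- u is C² in the open rectangle
    (hC2 : ContDiffOn ℝ 2 (fun p : ℝ × ℝ => u p.1 p.2) (Set.Ioo 0 l ×ˢ Set.Ioo 0 T))
    -- u, u_x, u_y are continuous up to the boundary
    (hu : ContinuousOn (fun p : ℝ × ℝ => u p.1 p.2) (Set.Icc 0 l ×ˢ Set.Icc 0 T))
    (hux : ContinuousOn (fun p : ℝ × ℝ => deriv (fun t => u t p.2) p.1)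
      (Set.Icc 0 l ×ˢ Set.Icc 0 T))
    (huy : ContinuousOn (fun p : ℝ × ℝ => deriv (u p.1) p.2)
      (Set.Icc 0 l ×ˢ Set.Icc 0 T))
    -- the wave equation u_{xx} − u_{yy} = 0 in the open rectangle
    (heq : ∀ x ∈ Set.Ioo (0:ℝ) l, ∀ y ∈ Set.Ioo (0:ℝ) T,
      deriv (deriv (fun t => u t y)) x - deriv (deriv (u x)) y = 0)
    -- initial traces (attained continuously)
    (hτ₂ : ∀ x ∈ Set.Icc (0:ℝ) l, u x 0 = τ₂ x)
    (hτ₁ : ∀ x ∈ Set.Icc (0:ℝ) l, deriv (u x) 0 = τ₁ x) :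
    ∀ y : ℝ, l ≤ y → y ≤ T →
      u 0 y = (∫ t in (0:ℝ)..l, τ₁ t) +
          (∫ s in (0:ℝ)..(y - l), deriv (fun t => u t s) l) -
          (∫ s in (0:ℝ)..y, deriv (fun t => u t s) 0) + u l (y - l) ∧
      u l y = (∫ t in (0:ℝ)..l, τ₁ t) -
          (∫ s in (0:ℝ)..(y - l), deriv (fun t => u t s) 0) +
          (∫ s in (0:ℝ)..y, deriv (fun t => u t s) l) + u 0 (y - l) := by
  have hT0 : (0:ℝ) < T := hl.trans hT
  set f : ℝ × ℝ → ℝ := (fun p : ℝ × ℝ => u p.1 p.2) with hfdef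
  set R : Set (ℝ × ℝ) := Set.Ioo 0 l ×ˢ Set.Ioo 0 T with hRdef
  set K : Set (ℝ × ℝ) := Set.Icc 0 l ×ˢ Set.Icc 0 T with hKdef
  have hRopen : IsOpen R := isOpen_Ioo.prod isOpen_Ioo
  have hKcp : IsCompact K := isCompact_Icc.prod isCompact_Icc
  set F : ℝ × ℝ → (ℝ × ℝ) →L[ℝ] ℝ := fderiv ℝ f with hFdef
  set H : ℝ × ℝ → (ℝ × ℝ) →L[ℝ] ((ℝ × ℝ) →L[ℝ] ℝ) := fderiv ℝ F with hHdef
  have hfd : ∀ p ∈ R, HasFDerivAt f (F p) p := fun p hp =>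
    ((hC2.contDiffAt (hRopen.mem_nhds hp)).differentiableAt (by norm_num)).hasFDerivAt
  have hFd : ∀ p ∈ R, HasFDerivAt F (H p) p := fun p hp =>
    (((hC2.contDiffAt (hRopen.mem_nhds hp)).fderiv_right
      (by norm_num : (1:WithTop ℕ∞) + 1 ≤ 2)).differentiableAt one_ne_zero).hasFDerivAt
  have hdx : ∀ x y : ℝ, (x, y) ∈ R → HasDerivAt (fun t => u t y) (F (x, y) (1, 0)) x := by
    intro x y hxy
    exact (hfd _ hxy).comp_hasDerivAt x ((hasDerivAt_id x).prodMk (hasDerivAt_const x y))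
  have hdy : ∀ x y : ℝ, (x, y) ∈ R → HasDerivAt (u x) (F (x, y) (0, 1)) y := by
    intro x y hxy
    exact (hfd _ hxy).comp_hasDerivAt y ((hasDerivAt_const y x).prodMk (hasDerivAt_id y))
  have hdx' : ∀ x y : ℝ, (x, y) ∈ R → deriv (fun t => u t y) x = F (x, y) (1, 0) :=
    fun x y h => (hdx x y h).deriv
  have hdy' : ∀ x y : ℝ, (x, y) ∈ R → deriv (u x) y = F (x, y) (0, 1) :=
    fun x y h => (hdy x y h).deriv
  -- derivative of directional evaluations of `F`
  have hD : ∀ (p : ℝ × ℝ), p ∈ R → ∀ (w : ℝ × ℝ) (γ : ℝ → ℝ × ℝ) (v : ℝ × ℝ) (s₀ : ℝ),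
      γ s₀ = p → HasDerivAt γ v s₀ → HasDerivAt (fun s => F (γ s) w) (H p v w) s₀ := by
    intro p hp w γ v s₀ hps hγ
    subst hps
    exact ((ContinuousLinearMap.apply ℝ ℝ w).hasFDerivAt.comp (γ s₀)
      (hFd _ hp)).comp_hasDerivAt s₀ hγ
  have hsymm : ∀ p ∈ R, ∀ v w : ℝ × ℝ, H p v w = H p w v := by
    intro p hp v w
    have hev : ∀ᶠ q in 𝓝 p, HasFDerivAt f (F q) q := by
      filter_upwards [hRopen.mem_nhds hp] with q hq using hfd q hq
    exact second_derivative_symmetric_of_eventually hev (hFd p hp) v w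
  have hwave : ∀ x y : ℝ, (x, y) ∈ R →
      H (x, y) (1, 0) (1, 0) = H (x, y) (0, 1) (0, 1) := by
    intro x y hxy
    have h1 : deriv (deriv (fun t => u t y)) x = H (x, y) (1, 0) (1, 0) := by
      have hO : {t : ℝ | (t, y) ∈ R} ∈ 𝓝 x :=
        (hRopen.preimage (continuous_id.prodMk continuous_const)).mem_nhds hxy
      have hev : (fun t => deriv (fun t' => u t' y) t)
          =ᶠ[𝓝 x] (fun t => F (t, y) (1, 0)) := by
        filter_upwards [hO] with t ht using hdx' t y ht
      rw [hev.deriv_eq]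
      exact (hD (x, y) hxy (1, 0) (fun t => (t, y)) (1, 0) x rfl
        ((hasDerivAt_id x).prodMk (hasDerivAt_const x y))).deriv
    have h2 : deriv (deriv (u x)) y = H (x, y) (0, 1) (0, 1) := by
      have hO : {s : ℝ | (x, s) ∈ R} ∈ 𝓝 y :=
        (hRopen.preimage (continuous_const.prodMk continuous_id)).mem_nhds hxy
      have hev : (fun s => deriv (u x) s) =ᶠ[𝓝 y] (fun s => F (x, s) (0, 1)) := by
        filter_upwards [hO] with s hs using hdy' x s hs
      rw [hev.deriv_eq]
      exact (hD (x, y) hxy (0, 1) (fun s => (x, s)) (0, 1) y rfl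
        ((hasDerivAt_const y x).prodMk (hasDerivAt_id y))).deriv
    have h3 := heq x hxy.1 y hxy.2
    rw [h1, h2] at h3
    linarith
  -- zero derivative of the Riemann invariants along characteristics
  have hdir : ∀ ε : ℝ, ε = 1 ∨ ε = -1 → ∀ x y s₀ : ℝ, (x + s₀ * ε, y + s₀) ∈ R →
      HasDerivAt (fun s => F (x + s * ε, y + s) (1, 0)
        - ε * F (x + s * ε, y + s) (0, 1)) 0 s₀ := by
    intro ε hε x y s₀ hm
    have hγ : HasDerivAt (fun s : ℝ => (x + s * ε, y + s)) ((ε, 1) : ℝ × ℝ) s₀ :=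
      (((hasDerivAt_mul_const ε).const_add x).prodMk
        (((hasDerivAt_id s₀).const_add y)))
    have h1 := hD _ hm (1, 0) _ _ s₀ rfl hγ
    have h2 := hD _ hm (0, 1) _ _ s₀ rfl hγ
    have h3 := h1.sub (h2.const_mul ε)
    refine h3.congr_deriv ?_
    have e : ((ε, 1) : ℝ × ℝ) = ε • ((1 : ℝ), (0 : ℝ)) + ((0 : ℝ), (1 : ℝ)) := by
      simp [Prod.ext_iff]
    set q : ℝ × ℝ := (x + s₀ * ε, y + s₀)
    rw [e, map_add, ContinuousLinearMap.map_smul]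
    simp only [ContinuousLinearMap.add_apply, ContinuousLinearMap.coe_smul',
      Pi.smul_apply, smul_eq_mul]
    have hs := hsymm _ hm (1, 0) (0, 1)
    have hw := hwave _ _ hm
    rw [hw, hs]
    rcases hε with h | h <;> subst h <;> ring
  -- the Riemann invariants are constant along characteristics, up to the boundary
  have hinv : ∀ ε : ℝ, ε = 1 ∨ ε = -1 → ∀ x y d : ℝ, 0 ≤ d → (x, y) ∈ K →
      (x + d * ε, y + d) ∈ K →
      deriv (fun t => u t (y + d)) (x + d * ε) - ε * deriv (u (x + d * ε)) (y + d)
        = deriv (fun t => u t y) x - ε * deriv (u x) y := by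
    intro ε hε x y d hd hp hq
    rcases eq_or_lt_of_le hd with hd0 | hd0
    · rw [← hd0]; norm_num
    have hεsq : ε * ε = 1 := by rcases hε with h | h <;> rw [h] <;> norm_num
    obtain ⟨hpx, hpy⟩ := hp
    obtain ⟨hqx, hqy⟩ := hq
    simp only [mem_Icc] at hpx hpy hqx hqy
    set g : ℝ → ℝ := fun s =>
      deriv (fun t => u t (y + s)) (x + s * ε) - ε * deriv (u (x + s * ε)) (y + s) with hg
    have hmemK : ∀ s ∈ Set.Icc (0:ℝ) d, (x + s * ε, y + s) ∈ K := by
      intro s hs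
      obtain ⟨hs0, hsd⟩ := hs
      rw [hKdef]
      simp only [Set.mem_prod, Set.mem_Icc]
      rcases hε with h | h <;> subst h
      · exact ⟨⟨by linarith only [hpx.1, hs0], by linarith only [hqx.2, hsd]⟩,
          ⟨by linarith only [hpy.1, hs0], by linarith only [hqy.2, hsd]⟩⟩
      · exact ⟨⟨by linarith only [hqx.1, hsd], by linarith only [hpx.2, hs0]⟩,
          ⟨by linarith only [hpy.1, hs0], by linarith only [hqy.2, hsd]⟩⟩
    have hmemR : ∀ s ∈ Set.Ioo (0:ℝ) d, (x + s * ε, y + s) ∈ R := by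
      intro s hs
      obtain ⟨hs0, hsd⟩ := hs
      rw [hRdef]
      simp only [Set.mem_prod, Set.mem_Ioo]
      rcases hε with h | h <;> subst h
      · exact ⟨⟨by linarith only [hpx.1, hs0], by linarith only [hqx.2, hsd]⟩,
          ⟨by linarith only [hpy.1, hs0], by linarith only [hqy.2, hsd]⟩⟩
      · exact ⟨⟨by linarith only [hqx.1, hsd], by linarith only [hpx.2, hs0]⟩,
          ⟨by linarith only [hpy.1, hs0], by linarith only [hqy.2, hsd]⟩⟩
    have hγc : Continuous (fun s : ℝ => (x + s * ε, y + s)) := by continuity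
    have hgc : ContinuousOn g (Set.Icc 0 d) := by
      have h1 : ContinuousOn
          (fun p : ℝ × ℝ => deriv (fun t => u t p.2) p.1 - ε * deriv (u p.1) p.2) K :=
        hux.sub (continuousOn_const.mul huy)
      exact h1.comp hγc.continuousOn hmemK
    have hgd : ∀ s ∈ Set.Ioo (0:ℝ) d, HasDerivWithinAt g 0 (Set.Ioi s) s := by
      intro s hs
      have hmR := hmemR s hs
      have hev : g =ᶠ[𝓝 s] fun s' =>
          F (x + s' * ε, y + s') (1, 0) - ε * F (x + s' * ε, y + s') (0, 1) := by
        have hO : {s' : ℝ | (x + s' * ε, y + s') ∈ R} ∈ 𝓝 s :=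
          (hRopen.preimage hγc).mem_nhds hmR
        filter_upwards [hO] with s' hs'
        show deriv (fun t => u t (y + s')) (x + s' * ε)
            - ε * deriv (u (x + s' * ε)) (y + s') = _
        rw [hdx' _ _ hs', hdy' _ _ hs']
      exact ((hdir ε hε x y s hmR).congr_of_eventuallyEq hev).hasDerivWithinAt
    have hFTC := intervalIntegral.integral_eq_sub_of_hasDeriv_right_of_le hd hgc hgd
      (_root_.intervalIntegrable_const (c := (0:ℝ)))
    simp only [intervalIntegral.integral_const, smul_eq_mul, mul_zero] at hFTC
    have : g d = g 0 := by linarith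
    simpa only [hg, zero_mul, add_zero, zero_add, mul_zero] using this
  have husub : ∀ {a b lo hi : ℝ}, a ∈ Set.Icc lo hi → b ∈ Set.Icc lo hi →
      Set.uIcc a b ⊆ Set.Icc lo hi := fun ha hb => Set.uIcc_subset_Icc ha hb
  -- vertical fundamental theorem of calculus, up to the lateral boundary
  have FTCv : ∀ x ∈ Set.Icc (0:ℝ) l, ∀ a ∈ Set.Icc (0:ℝ) T, ∀ b ∈ Set.Icc (0:ℝ) T,
      u x b - u x a = ∫ s in a..b, deriv (u x) s := by
    have key : ∀ a b : ℝ, a ∈ Set.Icc (0:ℝ) T → b ∈ Set.Icc (0:ℝ) T → a ≤ b →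
        ∀ x ∈ Set.Icc (0:ℝ) l, u x b - u x a = ∫ s in a..b, deriv (u x) s := by
      intro a b ha hb hab
      have hIccT : Set.Icc a b ⊆ Set.Icc (0:ℝ) T := Set.Icc_subset_Icc ha.1 hb.2
      have huIccT : Set.uIcc a b ⊆ Set.Icc (0:ℝ) T := husub ha hb
      have hint : ∀ x ∈ Set.Ioo (0:ℝ) l, u x b - u x a = ∫ s in a..b, deriv (u x) s := by
        intro x hx
        have hcont : ContinuousOn (u x) (Set.Icc a b) :=
          hu.comp ((continuous_const.prodMk continuous_id).continuousOn)
            (fun s hs => ⟨Set.Ioo_subset_Icc_self hx, hIccT hs⟩)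
        have hderiv : ∀ s ∈ Set.Ioo a b,
            HasDerivWithinAt (u x) (deriv (u x) s) (Set.Ioi s) s := by
          intro s hs
          have hm : (x, s) ∈ R := ⟨hx, lt_of_le_of_lt ha.1 hs.1, lt_of_lt_of_le hs.2 hb.2⟩
          rw [hdy' x s hm]
          exact (hdy x s hm).hasDerivWithinAt
        have hii : IntervalIntegrable (fun s => deriv (u x) s) volume a b :=
          (huy.comp ((continuous_const.prodMk continuous_id).continuousOn)
            (fun s hs => ⟨Set.Ioo_subset_Icc_self hx, huIccT hs⟩)).intervalIntegrable
        exact (intervalIntegral.integral_eq_sub_of_hasDeriv_right_of_le hab hcont hderiv hii).symm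
      intro x hx
      haveI hNB : (𝓝[Set.Ioo (0:ℝ) l] x).NeBot := by
        apply mem_closure_iff_nhdsWithin_neBot.mp
        rw [closure_Ioo hl.ne]
        exact hx
      obtain ⟨C, hC⟩ := hKcp.exists_bound_of_continuousOn huy
      have htend : ∀ c ∈ Set.Icc (0:ℝ) T, Tendsto (fun x' : ℝ => (x', c))
          (𝓝[Set.Ioo (0:ℝ) l] x) (𝓝[K] (x, c)) := by
        intro c hc
        rw [tendsto_nhdsWithin_iff]
        constructor
        · exact ((continuous_id.prodMk continuous_const).tendsto x).mono_left nhdsWithin_le_nhds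
        · filter_upwards [self_mem_nhdsWithin] with x' hx'
          exact ⟨Set.Ioo_subset_Icc_self hx', hc⟩
      have hLHS : Tendsto (fun x' => u x' b - u x' a) (𝓝[Set.Ioo (0:ℝ) l] x)
          (𝓝 (u x b - u x a)) :=
        ((hu (x, b) ⟨hx, hb⟩).tendsto.comp (htend b hb)).sub
          ((hu (x, a) ⟨hx, ha⟩).tendsto.comp (htend a ha))
      have hRHS : Tendsto (fun x' => ∫ s in a..b, deriv (u x') s) (𝓝[Set.Ioo (0:ℝ) l] x)
          (𝓝 (∫ s in a..b, deriv (u x) s)) := by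
        apply intervalIntegral.tendsto_integral_filter_of_dominated_convergence (fun _ => C)
        · filter_upwards [self_mem_nhdsWithin] with x' hx'
          refine (ContinuousOn.mono ?_ Set.uIoc_subset_uIcc).aestronglyMeasurable
            measurableSet_uIoc
          exact huy.comp ((continuous_const.prodMk continuous_id).continuousOn)
            (fun s hs => ⟨Set.Ioo_subset_Icc_self hx', huIccT hs⟩)
        · filter_upwards [self_mem_nhdsWithin] with x' hx'
          exact MeasureTheory.ae_of_all _ (fun s hs =>
            hC (x', s) ⟨Set.Ioo_subset_Icc_self hx', huIccT (Set.uIoc_subset_uIcc hs)⟩)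
        · exact _root_.intervalIntegrable_const
        · exact MeasureTheory.ae_of_all _ (fun s hs =>
            (huy (x, s) ⟨hx, huIccT (Set.uIoc_subset_uIcc hs)⟩).tendsto.comp
              (htend s (huIccT (Set.uIoc_subset_uIcc hs))))
      have hEv : (fun x' => u x' b - u x' a)
          =ᶠ[𝓝[Set.Ioo (0:ℝ) l] x] (fun x' => ∫ s in a..b, deriv (u x') s) := by
        filter_upwards [self_mem_nhdsWithin] with x' hx' using hint x' hx'
      exact tendsto_nhds_unique (hLHS.congr' hEv) hRHS
    intro x hx a ha b hb
    rcases le_total a b with h | h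
    · exact key a b ha hb h x hx
    · have h2 := key b a hb ha h x hx
      rw [intervalIntegral.integral_symm]
      linarith
  -- horizontal fundamental theorem of calculus, up to the boundary
  have FTCh : ∀ y ∈ Set.Icc (0:ℝ) T, ∀ a ∈ Set.Icc (0:ℝ) l, ∀ b ∈ Set.Icc (0:ℝ) l,
      u b y - u a y = ∫ t in a..b, deriv (fun t' => u t' y) t := by
    have key : ∀ a b : ℝ, a ∈ Set.Icc (0:ℝ) l → b ∈ Set.Icc (0:ℝ) l → a ≤ b →
        ∀ y ∈ Set.Icc (0:ℝ) T,
        u b y - u a y = ∫ t in a..b, deriv (fun t' => u t' y) t := by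
      intro a b ha hb hab
      have hIccl : Set.Icc a b ⊆ Set.Icc (0:ℝ) l := Set.Icc_subset_Icc ha.1 hb.2
      have huIccl : Set.uIcc a b ⊆ Set.Icc (0:ℝ) l := husub ha hb
      have hint : ∀ y ∈ Set.Ioo (0:ℝ) T,
          u b y - u a y = ∫ t in a..b, deriv (fun t' => u t' y) t := by
        intro y hy
        have hcont : ContinuousOn (fun t => u t y) (Set.Icc a b) :=
          hu.comp ((continuous_id.prodMk continuous_const).continuousOn)
            (fun t ht => ⟨hIccl ht, Set.Ioo_subset_Icc_self hy⟩)
        have hderiv : ∀ t ∈ Set.Ioo a b,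
            HasDerivWithinAt (fun t' => u t' y) (deriv (fun t' => u t' y) t)
              (Set.Ioi t) t := by
          intro t ht
          have hm : (t, y) ∈ R := ⟨⟨lt_of_le_of_lt ha.1 ht.1, lt_of_lt_of_le ht.2 hb.2⟩, hy⟩
          rw [hdx' t y hm]
          exact (hdx t y hm).hasDerivWithinAt
        have hii : IntervalIntegrable (fun t => deriv (fun t' => u t' y) t) volume a b :=
          (hux.comp ((continuous_id.prodMk continuous_const).continuousOn)
            (fun t ht => ⟨huIccl ht, Set.Ioo_subset_Icc_self hy⟩)).intervalIntegrable
        exact (intervalIntegral.integral_eq_sub_of_hasDeriv_right_of_le hab hcont hderiv hii).symm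
      intro y hy
      haveI hNB : (𝓝[Set.Ioo (0:ℝ) T] y).NeBot := by
        apply mem_closure_iff_nhdsWithin_neBot.mp
        rw [closure_Ioo hT0.ne]
        exact hy
      obtain ⟨C, hC⟩ := hKcp.exists_bound_of_continuousOn hux
      have htend : ∀ c ∈ Set.Icc (0:ℝ) l, Tendsto (fun y' : ℝ => (c, y'))
          (𝓝[Set.Ioo (0:ℝ) T] y) (𝓝[K] (c, y)) := by
        intro c hc
        rw [tendsto_nhdsWithin_iff]
        constructor
        · exact ((continuous_const.prodMk continuous_id).tendsto y).mono_left nhdsWithin_le_nhds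
        · filter_upwards [self_mem_nhdsWithin] with y' hy'
          exact ⟨hc, Set.Ioo_subset_Icc_self hy'⟩
      have hLHS : Tendsto (fun y' => u b y' - u a y') (𝓝[Set.Ioo (0:ℝ) T] y)
          (𝓝 (u b y - u a y)) :=
        ((hu (b, y) ⟨hb, hy⟩).tendsto.comp (htend b hb)).sub
          ((hu (a, y) ⟨ha, hy⟩).tendsto.comp (htend a ha))
      have hRHS : Tendsto (fun y' => ∫ t in a..b, deriv (fun t' => u t' y') t)
          (𝓝[Set.Ioo (0:ℝ) T] y) (𝓝 (∫ t in a..b, deriv (fun t' => u t' y) t)) := by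
        apply intervalIntegral.tendsto_integral_filter_of_dominated_convergence (fun _ => C)
        · filter_upwards [self_mem_nhdsWithin] with y' hy'
          refine (ContinuousOn.mono ?_ Set.uIoc_subset_uIcc).aestronglyMeasurable
            measurableSet_uIoc
          exact hux.comp ((continuous_id.prodMk continuous_const).continuousOn)
            (fun t ht => ⟨huIccl ht, Set.Ioo_subset_Icc_self hy'⟩)
        · filter_upwards [self_mem_nhdsWithin] with y' hy'
          exact MeasureTheory.ae_of_all _ (fun t ht =>
            hC (t, y') ⟨huIccl (Set.uIoc_subset_uIcc ht), Set.Ioo_subset_Icc_self hy'⟩)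
        · exact _root_.intervalIntegrable_const
        · exact MeasureTheory.ae_of_all _ (fun t ht =>
            (hux (t, y) ⟨huIccl (Set.uIoc_subset_uIcc ht), hy⟩).tendsto.comp
              (htend t (huIccl (Set.uIoc_subset_uIcc ht))))
      have hEv : (fun y' => u b y' - u a y')
          =ᶠ[𝓝[Set.Ioo (0:ℝ) T] y] (fun y' => ∫ t in a..b, deriv (fun t' => u t' y') t) := by
        filter_upwards [self_mem_nhdsWithin] with y' hy' using hint y' hy'
      exact tendsto_nhds_unique (hLHS.congr' hEv) hRHS
    intro y hy a ha b hb
    rcases le_total a b with h | h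
    · exact key a b ha hb h y hy
    · have h2 := key b a hb ha h y hy
      rw [intervalIntegral.integral_symm]
      linarith
  -- assembly
  intro y hy1 hy2
  have hy0 : (0:ℝ) ≤ y := le_trans hl.le hy1
  have h0l : (0:ℝ) ∈ Set.Icc (0:ℝ) l := ⟨le_rfl, hl.le⟩
  have hll : l ∈ Set.Icc (0:ℝ) l := ⟨hl.le, le_rfl⟩
  have h0T : (0:ℝ) ∈ Set.Icc (0:ℝ) T := ⟨le_rfl, hT0.le⟩
  have hlT : l ∈ Set.Icc (0:ℝ) T := ⟨hl.le, hT.le⟩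
  have hyT : y ∈ Set.Icc (0:ℝ) T := ⟨hy0, hy2⟩
  have hc0 : (0:ℝ) ≤ y - l := by linarith
  have hcT : y - l ∈ Set.Icc (0:ℝ) T := ⟨hc0, by linarith⟩
  have h0c : (0:ℝ) ∈ Set.Icc (0:ℝ) (y - l) := ⟨le_rfl, hc0⟩
  have hcc : y - l ∈ Set.Icc (0:ℝ) (y - l) := ⟨hc0, le_rfl⟩
  -- continuity of the various line restrictions
  have cA : ContinuousOn (fun s : ℝ => deriv (fun t => u t s) 0) (Set.Icc 0 T) :=
    hux.comp ((continuous_const.prodMk continuous_id).continuousOn) (fun s hs => ⟨h0l, hs⟩)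
  have cB : ContinuousOn (fun s : ℝ => deriv (fun t => u t s) l) (Set.Icc 0 T) :=
    hux.comp ((continuous_const.prodMk continuous_id).continuousOn) (fun s hs => ⟨hll, hs⟩)
  have cDy0 : ContinuousOn (fun s : ℝ => deriv (u 0) s) (Set.Icc 0 T) :=
    huy.comp ((continuous_const.prodMk continuous_id).continuousOn) (fun s hs => ⟨h0l, hs⟩)
  have cDyl : ContinuousOn (fun s : ℝ => deriv (u l) s) (Set.Icc 0 T) :=
    huy.comp ((continuous_const.prodMk continuous_id).continuousOn) (fun s hs => ⟨hll, hs⟩)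
  have cDx0 : ContinuousOn (fun t : ℝ => deriv (fun t' => u t' 0) t) (Set.Icc 0 l) :=
    hux.comp ((continuous_id.prodMk continuous_const).continuousOn) (fun t ht => ⟨ht, h0T⟩)
  have cτ : ContinuousOn τ₁ (Set.Icc 0 l) :=
    (huy.comp ((continuous_id.prodMk continuous_const).continuousOn)
      (fun t ht => ⟨ht, h0T⟩)).congr (fun t ht => (hτ₁ t ht).symm)
  have cAshift : ContinuousOn (fun s : ℝ => deriv (fun t => u t (s + l)) 0)
      (Set.Icc 0 (y - l)) :=
    cA.comp ((continuous_id.add continuous_const).continuousOn)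
      (fun s hs => ⟨by linarith [hs.1], by linarith [hs.2]⟩)
  have cBshift : ContinuousOn (fun s : ℝ => deriv (fun t => u t (s + l)) l)
      (Set.Icc 0 (y - l)) :=
    cB.comp ((continuous_id.add continuous_const).continuousOn)
      (fun s hs => ⟨by linarith [hs.1], by linarith [hs.2]⟩)
  have cDx0refl : ContinuousOn (fun s : ℝ => deriv (fun t' => u t' 0) (l - s))
      (Set.Icc 0 l) :=
    cDx0.comp ((continuous_const.sub continuous_id).continuousOn)
      (fun s hs => ⟨by linarith [hs.2], by linarith [hs.1]⟩)
  have cτrefl : ContinuousOn (fun s : ℝ => τ₁ (l - s)) (Set.Icc 0 l) :=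
    cτ.comp ((continuous_const.sub continuous_id).continuousOn)
      (fun s hs => ⟨by linarith [hs.2], by linarith [hs.1]⟩)
  have iI : ∀ {g : ℝ → ℝ} {lo hi : ℝ}, ContinuousOn g (Set.Icc lo hi) → ∀ a b : ℝ,
      a ∈ Set.Icc lo hi → b ∈ Set.Icc lo hi → IntervalIntegrable g volume a b :=
    fun hg a b ha hb => (hg.mono (husub ha hb)).intervalIntegrable
  -- change of variables
  have shiftInt : ∀ g : ℝ → ℝ, (∫ s in (0:ℝ)..(y - l), g (s + l)) = ∫ s in l..y, g s := by
    intro g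
    have h := intervalIntegral.integral_comp_add_right (a := (0:ℝ)) (b := y - l) g l
    simpa using h
  have reflInt : ∀ g : ℝ → ℝ, (∫ s in (0:ℝ)..l, g (l - s)) = ∫ t in (0:ℝ)..l, g t := by
    intro g
    have h := intervalIntegral.integral_comp_sub_left (a := (0:ℝ)) (b := l) g l
    simpa using h
  have SDy0 : (∫ s in (0:ℝ)..(y - l), deriv (u 0) (s + l)) = ∫ s in l..y, deriv (u 0) s :=
    shiftInt _
  have SDyl : (∫ s in (0:ℝ)..(y - l), deriv (u l) (s + l)) = ∫ s in l..y, deriv (u l) s :=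
    shiftInt _
  have SA : (∫ s in (0:ℝ)..(y - l), deriv (fun t => u t (s + l)) 0)
      = ∫ s in l..y, deriv (fun t => u t s) 0 := shiftInt (fun s => deriv (fun t => u t s) 0)
  have SB : (∫ s in (0:ℝ)..(y - l), deriv (fun t => u t (s + l)) l)
      = ∫ s in l..y, deriv (fun t => u t s) l := shiftInt (fun s => deriv (fun t => u t s) l)
  have RDx0 : (∫ s in (0:ℝ)..l, deriv (fun t' => u t' 0) (l - s))
      = ∫ t in (0:ℝ)..l, deriv (fun t' => u t' 0) t := reflInt (fun t => deriv (fun t' => u t' 0) t)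
  have Rτ : (∫ s in (0:ℝ)..l, τ₁ (l - s)) = ∫ t in (0:ℝ)..l, τ₁ t := reflInt τ₁
  -- splitting of integrals
  have spA : (∫ s in (0:ℝ)..l, deriv (fun t => u t s) 0)
      + (∫ s in l..y, deriv (fun t => u t s) 0)
      = ∫ s in (0:ℝ)..y, deriv (fun t => u t s) 0 :=
    intervalIntegral.integral_add_adjacent_intervals (iI cA 0 l h0T hlT) (iI cA l y hlT hyT)
  have spB : (∫ s in (0:ℝ)..l, deriv (fun t => u t s) l)
      + (∫ s in l..y, deriv (fun t => u t s) l)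
      = ∫ s in (0:ℝ)..y, deriv (fun t => u t s) l :=
    intervalIntegral.integral_add_adjacent_intervals (iI cB 0 l h0T hlT) (iI cB l y hlT hyT)
  -- pointwise consequences of the characteristic invariance
  have E3 : ∀ σ ∈ Set.Icc (0:ℝ) (y - l),
      deriv (u 0) (σ + l) = deriv (fun t => u t σ) l + deriv (u l) σ
        - deriv (fun t => u t (σ + l)) 0 := by
    intro σ hσ
    have hσT : σ ∈ Set.Icc (0:ℝ) T := ⟨hσ.1, by linarith [hσ.2]⟩
    have hσl : σ + l ∈ Set.Icc (0:ℝ) T := ⟨by linarith [hσ.1], by linarith [hσ.2]⟩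
    have hq : (l + l * (-1), σ + l) ∈ K := by
      rw [show l + l * (-1) = (0:ℝ) by ring]
      exact ⟨h0l, hσl⟩
    have h := hinv (-1) (Or.inr rfl) l σ l hl.le ⟨hll, hσT⟩ hq
    rw [show l + l * (-1) = (0:ℝ) by ring] at h
    linarith [h]
  have E9 : ∀ s ∈ Set.Icc (0:ℝ) l,
      deriv (u 0) s = deriv (fun t' => u t' 0) s + τ₁ s - deriv (fun t => u t s) 0 := by
    intro s hs
    have hsT : s ∈ Set.Icc (0:ℝ) T := ⟨hs.1, le_trans hs.2 hT.le⟩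
    have hq : (s + s * (-1), 0 + s) ∈ K := by
      rw [show s + s * (-1) = (0:ℝ) by ring, show (0:ℝ) + s = s by ring]
      exact ⟨h0l, hsT⟩
    have h := hinv (-1) (Or.inr rfl) s 0 s hs.1 ⟨hs, h0T⟩ hq
    rw [show s + s * (-1) = (0:ℝ) by ring, show (0:ℝ) + s = s by ring] at h
    have ht := hτ₁ s hs
    linarith [h]
  have E3' : ∀ σ ∈ Set.Icc (0:ℝ) (y - l),
      deriv (u l) (σ + l) = deriv (fun t => u t (σ + l)) l - deriv (fun t => u t σ) 0
        + deriv (u 0) σ := by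
    intro σ hσ
    have hσT : σ ∈ Set.Icc (0:ℝ) T := ⟨hσ.1, by linarith [hσ.2]⟩
    have hσl : σ + l ∈ Set.Icc (0:ℝ) T := ⟨by linarith [hσ.1], by linarith [hσ.2]⟩
    have hq : ((0:ℝ) + l * 1, σ + l) ∈ K := by
      rw [show (0:ℝ) + l * 1 = l by ring]
      exact ⟨hll, hσl⟩
    have h := hinv 1 (Or.inl rfl) 0 σ l hl.le ⟨h0l, hσT⟩ hq
    rw [show (0:ℝ) + l * 1 = l by ring] at h
    linarith [h]
  have E6' : ∀ s ∈ Set.Icc (0:ℝ) l,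
      deriv (u l) s = deriv (fun t => u t s) l - deriv (fun t' => u t' 0) (l - s)
        + τ₁ (l - s) := by
    intro s hs
    have hls : l - s ∈ Set.Icc (0:ℝ) l := ⟨by linarith [hs.2], by linarith [hs.1]⟩
    have hsT : s ∈ Set.Icc (0:ℝ) T := ⟨hs.1, le_trans hs.2 hT.le⟩
    have hq : (l - s + s * 1, 0 + s) ∈ K := by
      rw [show l - s + s * 1 = l by ring, show (0:ℝ) + s = s by ring]
      exact ⟨hll, hsT⟩
    have h := hinv 1 (Or.inl rfl) (l - s) 0 s hs.1 ⟨hls, h0T⟩ hq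
    rw [show l - s + s * 1 = l by ring, show (0:ℝ) + s = s by ring] at h
    have ht := hτ₁ (l - s) hls
    linarith [h]
  -- FTC along boundary segments
  have E1 : u 0 y - u 0 l = ∫ s in l..y, deriv (u 0) s := FTCv 0 h0l l hlT y hyT
  have E2 : u l (y - l) - u l 0 = ∫ s in (0:ℝ)..(y - l), deriv (u l) s :=
    FTCv l hll 0 h0T (y - l) hcT
  have E7 : u 0 l - u 0 0 = ∫ s in (0:ℝ)..l, deriv (u 0) s := FTCv 0 h0l 0 h0T l hlT
  have E8 : u l 0 - u 0 0 = ∫ t in (0:ℝ)..l, deriv (fun t' => u t' 0) t :=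
    FTCh 0 h0T 0 h0l l hll
  have E1' : u l y - u l l = ∫ s in l..y, deriv (u l) s := FTCv l hll l hlT y hyT
  have E2' : u 0 (y - l) - u 0 0 = ∫ s in (0:ℝ)..(y - l), deriv (u 0) s :=
    FTCv 0 h0l 0 h0T (y - l) hcT
  have E5' : u l l - u l 0 = ∫ s in (0:ℝ)..l, deriv (u l) s := FTCv l hll 0 h0T l hlT
  -- integrated invariance identities
  have I3 : (∫ s in (0:ℝ)..(y - l), deriv (u 0) (s + l))
      = (∫ s in (0:ℝ)..(y - l), deriv (fun t => u t s) l)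
        + (∫ s in (0:ℝ)..(y - l), deriv (u l) s)
        - (∫ s in (0:ℝ)..(y - l), deriv (fun t => u t (s + l)) 0) := by
    rw [← intervalIntegral.integral_add (iI cB 0 (y - l) h0T hcT) (iI cDyl 0 (y - l) h0T hcT),
      ← intervalIntegral.integral_sub
        ((iI cB 0 (y - l) h0T hcT).add (iI cDyl 0 (y - l) h0T hcT))
        (iI cAshift 0 (y - l) h0c hcc)]
    apply intervalIntegral.integral_congr
    intro σ hσ
    rw [Set.uIcc_of_le hc0] at hσ
    exact E3 σ hσ
  have I9 : (∫ s in (0:ℝ)..l, deriv (u 0) s)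
      = (∫ t in (0:ℝ)..l, deriv (fun t' => u t' 0) t) + (∫ t in (0:ℝ)..l, τ₁ t)
        - (∫ s in (0:ℝ)..l, deriv (fun t => u t s) 0) := by
    rw [← intervalIntegral.integral_add (iI cDx0 0 l h0l hll) (iI cτ 0 l h0l hll),
      ← intervalIntegral.integral_sub ((iI cDx0 0 l h0l hll).add (iI cτ 0 l h0l hll))
        (iI cA 0 l h0T hlT)]
    apply intervalIntegral.integral_congr
    intro s hs
    rw [Set.uIcc_of_le hl.le] at hs
    exact E9 s hs
  have I3' : (∫ s in (0:ℝ)..(y - l), deriv (u l) (s + l))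
      = (∫ s in (0:ℝ)..(y - l), deriv (fun t => u t (s + l)) l)
        - (∫ s in (0:ℝ)..(y - l), deriv (fun t => u t s) 0)
        + (∫ s in (0:ℝ)..(y - l), deriv (u 0) s) := by
    rw [← intervalIntegral.integral_sub (iI cBshift 0 (y - l) h0c hcc)
        (iI cA 0 (y - l) h0T hcT),
      ← intervalIntegral.integral_add
        ((iI cBshift 0 (y - l) h0c hcc).sub (iI cA 0 (y - l) h0T hcT))
        (iI cDy0 0 (y - l) h0T hcT)]
    apply intervalIntegral.integral_congr
    intro σ hσ
    rw [Set.uIcc_of_le hc0] at hσ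
    exact E3' σ hσ
  have I6' : (∫ s in (0:ℝ)..l, deriv (u l) s)
      = (∫ s in (0:ℝ)..l, deriv (fun t => u t s) l)
        - (∫ s in (0:ℝ)..l, deriv (fun t' => u t' 0) (l - s))
        + (∫ s in (0:ℝ)..l, τ₁ (l - s)) := by
    rw [← intervalIntegral.integral_sub (iI cB 0 l h0T hlT) (iI cDx0refl 0 l h0l hll),
      ← intervalIntegral.integral_add
        ((iI cB 0 l h0T hlT).sub (iI cDx0refl 0 l h0l hll)) (iI cτrefl 0 l h0l hll)]
    apply intervalIntegral.integral_congr
    intro s hs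
    rw [Set.uIcc_of_le hl.le] at hs
    exact E6' s hs
  constructor
  · linarith [E1, E2, E7, E8, I3, I9, SDy0, SA, spA]
  · linarith [E1', E2', E5', E8, I3', I6', SB, SDyl, RDx0, Rτ, spB]
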